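/- Let H be a real inner product space and L : H → H a nonnegative self-adjoint linear operator. Let M, Δt, ε > 0, b ∈ H, a > 0, and suppose φ^{n−1}, φ^n, φ^{n+1} ∈ H and r^{n−1}, r^n, r^{n+1} ∈ ℝ satisfy the second-order BDF-SAV scheme: (3φ^{n+1} − 4φ^n + φ^{n−1})/(2Δt) = −M L μ^{n+1}, μ^{n+1} = ε² L φ^{n+1} + a r^{n+1} b, (3r^{n+1} − 4r^n + r^{n−1})/(2Δt) = (a/2)(b, (3φ^{n+1} − 4φ^n + φ^{n−1})/(2Δt)). Then (ε²/2)(Lφ^{n+1}, φ^{n+1}) + (ε²/2)(L(2φ^{n+1} − φ^n), 2φ^{n+1} − φ^n) + |r^{n+1}|² + |2r^{n+1} − r^n|² ≤ (ε²/2)(Lφ^n, φ^n) + (ε²/2)(L(2φ^n − φ^{n−1}), 2φ^n − φ^{n−1}) + |r^n|² + |2r^n − r^{n−1}|². -/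

import Mathlib

open scoped RealInnerProductSpace

/-- unconditional energy stability of the second-order BDF-SAV scheme.
Here `b` plays the role of `F'(φ̃ⁿ⁺¹ᐟ²)` and `a = 1/√(E₁+C₀) > 0`. -/
theorem sav_bdf2_energy_stable
    {H : Type*} [NormedAddCommGroup H] [InnerProductSpace ℝ H]
    (L : H →L[ℝ] H)
    (hLsa : ∀ u v : H, ⟪L u, v⟫ = ⟪u, L v⟫)
    (hLpos : ∀ u : H, 0 ≤ ⟪L u, u⟫)
    (M Δt ε a : ℝ) (hM : 0 < M) (hΔt : 0 < Δt) (hε : 0 < ε) (ha : 0 < a)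
    (b φnm1 φn φn1 μ : H) (rnm1 rn rn1 : ℝ)
    (h1 : (1 / (2 * Δt)) • ((3 : ℝ) • φn1 - (4 : ℝ) • φn + φnm1) = -(M • L μ))
    (h2 : μ = (ε ^ 2) • L φn1 + (a * rn1) • b)
    (h3 : (3 * rn1 - 4 * rn + rnm1) / (2 * Δt) =
      a / 2 * ⟪b, (1 / (2 * Δt)) • ((3 : ℝ) • φn1 - (4 : ℝ) • φn + φnm1)⟫) :
    ε ^ 2 / 2 * ⟪L φn1, φn1⟫ +
        ε ^ 2 / 2 * ⟪L ((2 : ℝ) • φn1 - φn), (2 : ℝ) • φn1 - φn⟫ +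
        rn1 ^ 2 + (2 * rn1 - rn) ^ 2 ≤
      ε ^ 2 / 2 * ⟪L φn, φn⟫ +
        ε ^ 2 / 2 * ⟪L ((2 : ℝ) • φn - φnm1), (2 : ℝ) • φn - φnm1⟫ +
        rn ^ 2 + (2 * rn - rnm1) ^ 2 := by
  set g : H := (3 : ℝ) • φn1 - (4 : ℝ) • φn + φnm1 with hg
  have hΔt' : (2 : ℝ) * Δt ≠ 0 := by positivity
  -- inner product of the scheme with μ
  have hgμ : ⟪g, μ⟫ = -((2 * Δt) * M * ⟪L μ, μ⟫) := by
    have h := congrArg (fun x : H => ⟪x, μ⟫) h1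
    simp only [real_inner_smul_left, inner_neg_left] at h
    field_simp at h
    linear_combination h
  have hgμ_le : ⟪g, μ⟫ ≤ 0 := by
    rw [hgμ]
    have h0 := hLpos μ
    nlinarith [mul_nonneg (mul_nonneg (by linarith : (0:ℝ) ≤ 2 * Δt) hM.le) h0]
  -- expand via h2
  have hexp : ⟪g, μ⟫ = ε ^ 2 * ⟪g, L φn1⟫ + a * rn1 * ⟪g, b⟫ := by
    rw [h2]
    simp [inner_add_right, real_inner_smul_right]
  -- h3 gives ⟪b, g⟫
  have hbg : 3 * rn1 - 4 * rn + rnm1 = a / 2 * ⟪b, g⟫ := by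
    have h := h3
    rw [real_inner_smul_right] at h
    field_simp at h
    have h4 : (3 * rn1 - 4 * rn + rnm1) * (2 * (2 * Δt))
        = (a / 2 * ⟪b, g⟫) * (2 * (2 * Δt)) := by linear_combination (2 * Δt) * h
    exact mul_right_cancel₀ (by positivity) h4
  have hgb : ⟪g, b⟫ = ⟪b, g⟫ := real_inner_comm _ _
  -- main inequality on inner products
  have hmain : ε ^ 2 * ⟪g, L φn1⟫ + 2 * rn1 * (3 * rn1 - 4 * rn + rnm1) ≤ 0 := by
    have h5 : a * rn1 * ⟪g, b⟫ = 2 * rn1 * (3 * rn1 - 4 * rn + rnm1) := by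
      rw [hgb, hbg]; ring
    nlinarith [hgμ_le, hexp]
  -- abbreviations for the quadratic form entries
  have hsa' : ∀ u v : H, ⟪L u, v⟫ = ⟪L v, u⟫ := fun u v => by
    rw [hLsa]; exact real_inner_comm _ _
  have hQ : 0 ≤ ⟪L (φn1 - (2:ℝ) • φn + φnm1), φn1 - (2:ℝ) • φn + φnm1⟫ :=
    hLpos _
  have hD : ⟪L φn, φn1⟫ = ⟪L φn1, φn⟫ := hsa' _ _
  have hE : ⟪L φnm1, φn1⟫ = ⟪L φn1, φnm1⟫ := hsa' _ _
  have hF : ⟪L φnm1, φn⟫ = ⟪L φn, φnm1⟫ := hsa' _ _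
  have hgL : ⟪g, L φn1⟫ = 3 * ⟪L φn1, φn1⟫ - 4 * ⟪L φn1, φn⟫ + ⟪L φn1, φnm1⟫ := by
    rw [hg]
    simp only [inner_add_left, inner_sub_left, real_inner_smul_left]
    rw [real_inner_comm φn1 (L φn1), real_inner_comm φn (L φn1),
      real_inner_comm φnm1 (L φn1)]
  simp only [map_add, map_sub, map_smul, inner_add_left, inner_sub_left,
    inner_add_right, inner_sub_right, real_inner_smul_left, real_inner_smul_right,
    smul_eq_mul] at hQ ⊢
  rw [hgL] at hmain
  rw [hD, hE, hF] at hQ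
  rw [hF]
  nlinarith [hmain, hQ, sq_nonneg (rn1 - 2 * rn + rnm1)]
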